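/- Let a ≥ 0 and α > 0, let A = (a_{nk}) be a non-negative regular summability matrix, and let f : [0,∞) → ℝ be continuous with |f(x)| ≤ M·(1+x²) for all x ≥ 0 and such that lim_{x→∞} f(x)/(1+x²) exists. Then the sequence x_n = ‖K_n^a(f) − f‖_{ρ_α}, where ‖g‖_{ρ_α} = sup_{x∈[0,∞)} |g(x)|/(1+x^{2+α}), is A-statistically convergent to 0; that is, for every ε > 0, lim_{n→∞} Σ_{k : x_k ≥ ε} a_{nk} = 0. -/

import Mathlib

open MeasureTheory Filter

noncomputable section

/-- Rising factorial `(n)_i = n(n+1)⋯(n+i-1)`, with `(n)_0 = 1`. -/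
def risingFac (n : ℕ) : ℕ → ℝ
  | 0 => 1
  | i + 1 => risingFac n i * ((n : ℝ) + i)

/-- `P_k(n,a) = Σ_{i=0}^{k} C(k,i) (n)_i a^(k-i)`. -/
def Pba (k n : ℕ) (a : ℝ) : ℝ :=
  ∑ i ∈ Finset.range (k + 1), (k.choose i : ℝ) * risingFac n i * a ^ (k - i)

/-- Generalized Baskakov basis function `W_{n,k}^a(x)`. -/
def Wgb (a : ℝ) (n k : ℕ) (x : ℝ) : ℝ :=
  Real.exp (-(a * x) / (1 + x)) * (Pba k n a / (Nat.factorial k : ℝ)) * x ^ k /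
    (1 + x) ^ (n + k)

/-- Generalized Baskakov–Kantorovich operator `K_n^a(f;x)`. -/
def Kgb (a : ℝ) (n : ℕ) (f : ℝ → ℝ) (x : ℝ) : ℝ :=
  ((n : ℝ) + 1) * ∑' k : ℕ,
    Wgb a n k x * ∫ t in ((k : ℝ) / ((n : ℝ) + 1))..(((k : ℝ) + 1) / ((n : ℝ) + 1)), f t


/-- Weighted norm `‖g‖_{ρ_α} = sup_{x≥0} |g(x)|/(1+x^{2+α})` with `ρ_α(x) = 1+x^{2+α}`. -/
def rhoAlphaNorm (α : ℝ) (g : ℝ → ℝ) : ℝ :=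
  ⨆ x : Set.Ici (0 : ℝ), |g x| / (1 + (x : ℝ) ^ ((2 : ℝ) + α))

set_option maxHeartbeats 1600000

section SeriesAux
open Finset
lemma risingFac_nonneg (n i : ℕ) : 0 ≤ risingFac n i := by
  induction i with
  | zero => norm_num [risingFac]
  | succ i ih => exact mul_nonneg ih (by positivity)

lemma risingFac_succ (n i : ℕ) : risingFac n (i+1) = risingFac n i * ((n:ℝ) + i) := rfl

lemma risingFac_succ_left (n k : ℕ) : risingFac n (k+1) = (n:ℝ) * risingFac (n+1) k := by
  induction k with
  | zero => simp [risingFac]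
  | succ k ih =>
    rw [risingFac_succ, ih, risingFac_succ]
    push_cast; ring

lemma risingFac_zero_left (i : ℕ) : risingFac 0 (i+1) = 0 := by
  rw [risingFac_succ_left]; simp

lemma sum_risingFac (n k : ℕ) :
    ∑ i ∈ range (k+1), risingFac n i / (Nat.factorial i : ℝ) =
      risingFac (n+1) k / (Nat.factorial k : ℝ) := by
  induction k with
  | zero => simp [risingFac]
  | succ k ih =>
    rw [Finset.sum_range_succ, ih, risingFac_succ_left n k,
      show risingFac (n+1) (k+1) = risingFac (n+1) k * (((n:ℝ)+1) + k) by
        rw [risingFac_succ]; push_cast; ring]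
    have h1 : (Nat.factorial k : ℝ) ≠ 0 := Nat.cast_ne_zero.2 (Nat.factorial_ne_zero k)
    have h2 : (Nat.factorial (k+1) : ℝ) = (k+1) * Nat.factorial k := by
      push_cast [Nat.factorial_succ]; ring
    rw [h2]
    field_simp
    ring


lemma hasSum_rising (n : ℕ) {u : ℝ} (hu0 : 0 ≤ u) (hu1 : u < 1) :
    HasSum (fun i => risingFac n i / (Nat.factorial i : ℝ) * u ^ i) (((1-u)^n)⁻¹) := by
  induction n with
  | zero =>
    have : (fun i => risingFac 0 i / (Nat.factorial i : ℝ) * u ^ i)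
        = fun i => if i = 0 then (1:ℝ) else 0 := by
      funext i
      cases i with
      | zero => simp [risingFac]
      | succ i => simp [risingFac_zero_left]
    rw [this]
    simpa using hasSum_ite_eq (0 : ℕ) (1:ℝ)
  | succ n ih =>
    have hgeo : HasSum (fun j => u ^ j) ((1-u)⁻¹) := hasSum_geometric_of_lt_one hu0 hu1
    have hf : Summable fun i => ‖risingFac n i / (Nat.factorial i : ℝ) * u ^ i‖ := by
      refine ih.summable.congr fun i => ?_
      rw [Real.norm_eq_abs, abs_of_nonneg (mul_nonneg (div_nonneg (risingFac_nonneg _ _)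
        (Nat.cast_nonneg _)) (pow_nonneg hu0 _))]
    have hg : Summable fun j => ‖u ^ j‖ := by
      refine hgeo.summable.congr fun j => ?_
      rw [Real.norm_eq_abs, abs_of_nonneg (by positivity)]
    have H := hasSum_sum_range_mul_of_summable_norm hf hg
    rw [ih.tsum_eq, hgeo.tsum_eq] at H
    have heq : (fun k => ∑ i ∈ range (k+1),
        (risingFac n i / (Nat.factorial i : ℝ) * u ^ i) * u ^ (k - i))
        = fun k => risingFac (n+1) k / (Nat.factorial k : ℝ) * u ^ k := by
      funext k
      rw [← sum_risingFac n k, Finset.sum_mul]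
      refine Finset.sum_congr rfl fun i hi => ?_
      have hik : i ≤ k := Nat.lt_succ_iff.mp (Finset.mem_range.mp hi)
      rw [mul_assoc, ← pow_add, Nat.add_sub_cancel' hik]
    rw [heq] at H
    rw [pow_succ, mul_inv]; exact H


lemma hasSum_exp' (y : ℝ) : HasSum (fun j => y ^ j / (Nat.factorial j : ℝ)) (Real.exp y) := by
  rw [Real.exp_eq_exp_ℝ]; exact NormedSpace.expSeries_div_hasSum_exp y

lemma Pba_coeff (n k : ℕ) (a u : ℝ) :
    ∑ i ∈ range (k+1), (risingFac n i / (Nat.factorial i : ℝ) * u ^ i) *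
        ((a*u) ^ (k-i) / (Nat.factorial (k-i) : ℝ))
      = Pba k n a / (Nat.factorial k : ℝ) * u ^ k := by
  rw [Pba, Finset.sum_div, Finset.sum_mul]
  refine Finset.sum_congr rfl fun i hi => ?_
  have hik : i ≤ k := Nat.lt_succ_iff.mp (Finset.mem_range.mp hi)
  have hc : (k.choose i : ℝ) = (Nat.factorial k : ℝ) /
      ((Nat.factorial i : ℝ) * (Nat.factorial (k-i) : ℝ)) := Nat.cast_choose ℝ hik
  have hi0 : (Nat.factorial i : ℝ) ≠ 0 := Nat.cast_ne_zero.2 (Nat.factorial_ne_zero i)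
  have hki0 : (Nat.factorial (k-i) : ℝ) ≠ 0 := Nat.cast_ne_zero.2 (Nat.factorial_ne_zero _)
  have hk0 : (Nat.factorial k : ℝ) ≠ 0 := Nat.cast_ne_zero.2 (Nat.factorial_ne_zero k)
  have hu : u ^ k = u ^ i * u ^ (k - i) := by rw [← pow_add, Nat.add_sub_cancel' hik]
  rw [hc, mul_pow, hu]
  field_simp

lemma Pba_nonneg {a : ℝ} (ha : 0 ≤ a) (k n : ℕ) : 0 ≤ Pba k n a :=
  Finset.sum_nonneg fun i _ => mul_nonneg (mul_nonneg (Nat.cast_nonneg _)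
    (risingFac_nonneg _ _)) (pow_nonneg ha _)

lemma hasSum_Pba (n : ℕ) {a u : ℝ} (ha : 0 ≤ a) (hu0 : 0 ≤ u) (hu1 : u < 1) :
    HasSum (fun k => Pba k n a / (Nat.factorial k : ℝ) * u ^ k)
      (((1-u)^n)⁻¹ * Real.exp (a*u)) := by
  have hR := hasSum_rising n hu0 hu1
  have hE := hasSum_exp' (a*u)
  have hf : Summable fun i => ‖risingFac n i / (Nat.factorial i : ℝ) * u ^ i‖ := by
    refine hR.summable.congr fun i => ?_
    rw [Real.norm_eq_abs, abs_of_nonneg (mul_nonneg (div_nonneg (risingFac_nonneg _ _)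
      (Nat.cast_nonneg _)) (pow_nonneg hu0 _))]
  have hg : Summable fun j => ‖(a*u) ^ j / (Nat.factorial j : ℝ)‖ := by
    refine hE.summable.congr fun j => ?_
    rw [Real.norm_eq_abs, abs_of_nonneg (div_nonneg (pow_nonneg (mul_nonneg ha hu0) _)
      (Nat.cast_nonneg _))]
  have H := hasSum_sum_range_mul_of_summable_norm hf hg
  rw [hR.tsum_eq, hE.tsum_eq] at H
  exact H.congr_fun (fun k => (Pba_coeff n k a u).symm)


lemma summable_norm_of_nonneg {f : ℕ → ℝ} (h : Summable f) (hf : ∀ i, 0 ≤ f i) :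
    Summable fun i => ‖f i‖ :=
  h.congr fun i => by rw [Real.norm_eq_abs, abs_of_nonneg (hf i)]

lemma fact_succ_cast (m : ℕ) : ((Nat.factorial (m+1) : ℝ)) = ((m:ℝ)+1) * (Nat.factorial m : ℝ) := by
  push_cast [Nat.factorial_succ]; ring

lemma hasSum_rising_id (n : ℕ) {u : ℝ} (hu0 : 0 ≤ u) (hu1 : u < 1) :
    HasSum (fun (i : ℕ) => (i:ℝ) * (risingFac n i / (Nat.factorial i : ℝ) * u ^ i))
      ((n:ℝ) * u * ((1-u)^(n+1))⁻¹) := by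
  have h := (hasSum_rising (n+1) hu0 hu1).mul_left ((n:ℝ)*u)
  have heq : (fun m => (n:ℝ)*u * (risingFac (n+1) m / (Nat.factorial m : ℝ) * u ^ m))
      = fun m => ((m+1:ℕ):ℝ) * (risingFac n (m+1) / (Nat.factorial (m+1) : ℝ) * u ^ (m+1)) := by
    funext m
    rw [risingFac_succ_left, fact_succ_cast, pow_succ]
    have : ((m:ℝ)+1) ≠ 0 := by positivity
    push_cast
    field_simp
  rw [heq] at h
  have h2 := (hasSum_nat_add_iff (f := fun (i : ℕ) => (i:ℝ) *
    (risingFac n i / (Nat.factorial i : ℝ) * u ^ i)) 1).mp (by exact_mod_cast h)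
  simpa using h2

lemma hasSum_exp_id (y : ℝ) :
    HasSum (fun (j : ℕ) => (j:ℝ) * (y ^ j / (Nat.factorial j : ℝ))) (y * Real.exp y) := by
  have h := (hasSum_exp' y).mul_left y
  have heq : (fun m => y * (y ^ m / (Nat.factorial m : ℝ)))
      = fun m => ((m+1:ℕ):ℝ) * (y ^ (m+1) / (Nat.factorial (m+1) : ℝ)) := by
    funext m
    rw [fact_succ_cast, pow_succ]
    have : ((m:ℝ)+1) ≠ 0 := by positivity
    push_cast
    field_simp
  rw [heq] at h
  have h2 := (hasSum_nat_add_iff (f := fun (j : ℕ) => (j:ℝ) *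
    (y ^ j / (Nat.factorial j : ℝ))) 1).mp (by exact_mod_cast h)
  simpa using h2

lemma hasSum_rising_id2 (n : ℕ) {u : ℝ} (hu0 : 0 ≤ u) (hu1 : u < 1) :
    HasSum (fun (i : ℕ) => (i:ℝ) * ((i:ℝ)-1) * (risingFac n i / (Nat.factorial i : ℝ) * u ^ i))
      ((n:ℝ) * ((n:ℝ)+1) * u^2 * ((1-u)^(n+2))⁻¹) := by
  have h := (hasSum_rising (n+2) hu0 hu1).mul_left ((n:ℝ)*((n:ℝ)+1)*u^2)
  have heq : (fun m => (n:ℝ)*((n:ℝ)+1)*u^2 * (risingFac (n+2) m / (Nat.factorial m : ℝ) * u ^ m))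
      = fun m => ((m+2:ℕ):ℝ) * (((m+2:ℕ):ℝ)-1) *
          (risingFac n (m+2) / (Nat.factorial (m+2) : ℝ) * u ^ (m+2)) := by
    funext m
    have e1 : risingFac n (m+2) = (n:ℝ) * ((n:ℝ)+1) * risingFac (n+2) m := by
      rw [risingFac_succ_left, risingFac_succ_left]
      push_cast; ring
    rw [e1, fact_succ_cast, fact_succ_cast, pow_succ, pow_succ]
    have h1 : ((m:ℝ)+1) ≠ 0 := by positivity
    have h2 : ((m:ℝ)+1+1) ≠ 0 := by positivity
    push_cast
    field_simp
    ring
  rw [heq] at h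
  have h2 := (hasSum_nat_add_iff (f := fun (i : ℕ) => (i:ℝ) * ((i:ℝ)-1) *
    (risingFac n i / (Nat.factorial i : ℝ) * u ^ i)) 2).mp (by exact_mod_cast h)
  simpa [Finset.sum_range_succ] using h2

lemma hasSum_exp_id2 (y : ℝ) :
    HasSum (fun (j : ℕ) => (j:ℝ) * ((j:ℝ)-1) * (y ^ j / (Nat.factorial j : ℝ)))
      (y^2 * Real.exp y) := by
  have h := (hasSum_exp' y).mul_left (y^2)
  have heq : (fun m => y^2 * (y ^ m / (Nat.factorial m : ℝ)))
      = fun m => ((m+2:ℕ):ℝ) * (((m+2:ℕ):ℝ)-1) * (y ^ (m+2) / (Nat.factorial (m+2) : ℝ)) := by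
    funext m
    rw [fact_succ_cast, fact_succ_cast, pow_succ, pow_succ]
    have h1 : ((m:ℝ)+1) ≠ 0 := by positivity
    have h2 : ((m:ℝ)+1+1) ≠ 0 := by positivity
    push_cast
    field_simp
    ring
  rw [heq] at h
  have h2 := (hasSum_nat_add_iff (f := fun (j : ℕ) => (j:ℝ) * ((j:ℝ)-1) *
    (y ^ j / (Nat.factorial j : ℝ))) 2).mp (by exact_mod_cast h)
  simpa [Finset.sum_range_succ] using h2


section
variable (n : ℕ) {a u : ℝ} (ha : 0 ≤ a) (hu0 : 0 ≤ u) (hu1 : u < 1)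

include ha hu0 hu1 in
lemma hasSum_Pba_id :
    HasSum (fun (k : ℕ) => (k:ℝ) * (Pba k n a / (Nat.factorial k : ℝ) * u ^ k))
      ((n:ℝ)*u*((1-u)^(n+1))⁻¹ * Real.exp (a*u) + ((1-u)^n)⁻¹ * (a*u*Real.exp (a*u))) := by
  have hα := hasSum_rising n hu0 hu1
  have hβ := hasSum_exp' (a*u)
  have hαi := hasSum_rising_id n hu0 hu1
  have hβj := hasSum_exp_id (a*u)
  have hau : 0 ≤ a*u := mul_nonneg ha hu0
  have hαpos : ∀ i, (0:ℝ) ≤ risingFac n i / (Nat.factorial i : ℝ) * u ^ i := fun i =>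
    mul_nonneg (div_nonneg (risingFac_nonneg _ _) (Nat.cast_nonneg _)) (pow_nonneg hu0 _)
  have hβpos : ∀ j, (0:ℝ) ≤ (a*u) ^ j / (Nat.factorial j : ℝ) := fun j =>
    div_nonneg (pow_nonneg hau _) (Nat.cast_nonneg _)
  have nα := summable_norm_of_nonneg hα.summable hαpos
  have nβ := summable_norm_of_nonneg hβ.summable hβpos
  have nαi := summable_norm_of_nonneg hαi.summable fun i =>
    mul_nonneg (Nat.cast_nonneg _) (hαpos i)
  have nβj := summable_norm_of_nonneg hβj.summable fun j =>
    mul_nonneg (Nat.cast_nonneg _) (hβpos j)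
  have H1 := hasSum_sum_range_mul_of_summable_norm nαi nβ
  rw [hαi.tsum_eq, hβ.tsum_eq] at H1
  have H2 := hasSum_sum_range_mul_of_summable_norm nα nβj
  rw [hα.tsum_eq, hβj.tsum_eq] at H2
  have H := H1.add H2
  refine H.congr_fun fun k => ?_
  rw [← Finset.sum_add_distrib]
  have : ∀ i ∈ range (k+1),
      ((i:ℝ) * (risingFac n i / (Nat.factorial i : ℝ) * u ^ i)) *
          ((a*u) ^ (k-i) / (Nat.factorial (k-i) : ℝ)) +
        (risingFac n i / (Nat.factorial i : ℝ) * u ^ i) *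
          (((k-i:ℕ):ℝ) * ((a*u) ^ (k-i) / (Nat.factorial (k-i) : ℝ)))
      = (k:ℝ) * ((risingFac n i / (Nat.factorial i : ℝ) * u ^ i) *
          ((a*u) ^ (k-i) / (Nat.factorial (k-i) : ℝ))) := by
    intro i hi
    have hik : i ≤ k := Nat.lt_succ_iff.mp (Finset.mem_range.mp hi)
    rw [Nat.cast_sub hik]
    ring
  rw [Finset.sum_congr rfl this, ← Finset.mul_sum, Pba_coeff]

include ha hu0 hu1 in
lemma hasSum_Pba_id2 :
    HasSum (fun (k : ℕ) => (k:ℝ) * ((k:ℝ)-1) * (Pba k n a / (Nat.factorial k : ℝ) * u ^ k))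
      ((n:ℝ)*((n:ℝ)+1)*u^2*((1-u)^(n+2))⁻¹ * Real.exp (a*u)
        + 2 * (((n:ℝ)*u*((1-u)^(n+1))⁻¹) * ((a*u) * Real.exp (a*u)))
        + ((1-u)^n)⁻¹ * ((a*u)^2*Real.exp (a*u))) := by
  have hα := hasSum_rising n hu0 hu1
  have hβ := hasSum_exp' (a*u)
  have hαi := hasSum_rising_id n hu0 hu1
  have hβj := hasSum_exp_id (a*u)
  have hαi2 := hasSum_rising_id2 n hu0 hu1
  have hβj2 := hasSum_exp_id2 (a*u)
  have hau : 0 ≤ a*u := mul_nonneg ha hu0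
  have hαpos : ∀ i, (0:ℝ) ≤ risingFac n i / (Nat.factorial i : ℝ) * u ^ i := fun i =>
    mul_nonneg (div_nonneg (risingFac_nonneg _ _) (Nat.cast_nonneg _)) (pow_nonneg hu0 _)
  have hβpos : ∀ j, (0:ℝ) ≤ (a*u) ^ j / (Nat.factorial j : ℝ) := fun j =>
    div_nonneg (pow_nonneg hau _) (Nat.cast_nonneg _)
  have hii : ∀ i : ℕ, (0:ℝ) ≤ (i:ℝ) * ((i:ℝ)-1) := by
    intro i
    rcases Nat.eq_zero_or_pos i with h | h
    · simp [h]
    · have : (1:ℝ) ≤ (i:ℝ) := by exact_mod_cast h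
      nlinarith
  have nα := summable_norm_of_nonneg hα.summable hαpos
  have nβ := summable_norm_of_nonneg hβ.summable hβpos
  have nαi := summable_norm_of_nonneg hαi.summable fun i =>
    mul_nonneg (Nat.cast_nonneg _) (hαpos i)
  have nβj := summable_norm_of_nonneg hβj.summable fun j =>
    mul_nonneg (Nat.cast_nonneg _) (hβpos j)
  have nαi2 := summable_norm_of_nonneg hαi2.summable fun i =>
    mul_nonneg (hii i) (hαpos i)
  have nβj2 := summable_norm_of_nonneg hβj2.summable fun j =>
    mul_nonneg (hii j) (hβpos j)
  have H1 := hasSum_sum_range_mul_of_summable_norm nαi2 nβ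
  rw [hαi2.tsum_eq, hβ.tsum_eq] at H1
  have H2 := (hasSum_sum_range_mul_of_summable_norm nαi nβj).mul_left 2
  rw [hαi.tsum_eq, hβj.tsum_eq] at H2
  have H3 := hasSum_sum_range_mul_of_summable_norm nα nβj2
  rw [hα.tsum_eq, hβj2.tsum_eq] at H3
  have H := (H1.add H2).add H3
  refine H.congr_fun fun k => ?_
  rw [Finset.mul_sum, ← Finset.sum_add_distrib, ← Finset.sum_add_distrib]
  have : ∀ i ∈ range (k+1),
      ((i:ℝ) * ((i:ℝ)-1) * (risingFac n i / (Nat.factorial i : ℝ) * u ^ i)) *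
          ((a*u) ^ (k-i) / (Nat.factorial (k-i) : ℝ)) +
        2 * (((i:ℝ) * (risingFac n i / (Nat.factorial i : ℝ) * u ^ i)) *
          (((k-i:ℕ):ℝ) * ((a*u) ^ (k-i) / (Nat.factorial (k-i) : ℝ)))) +
        (risingFac n i / (Nat.factorial i : ℝ) * u ^ i) *
          (((k-i:ℕ):ℝ) * (((k-i:ℕ):ℝ)-1) * ((a*u) ^ (k-i) / (Nat.factorial (k-i) : ℝ)))
      = (k:ℝ) * ((k:ℝ)-1) * ((risingFac n i / (Nat.factorial i : ℝ) * u ^ i) *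
          ((a*u) ^ (k-i) / (Nat.factorial (k-i) : ℝ))) := by
    intro i hi
    have hik : i ≤ k := Nat.lt_succ_iff.mp (Finset.mem_range.mp hi)
    rw [Nat.cast_sub hik]
    ring
  rw [Finset.sum_congr rfl this, ← Finset.mul_sum, Pba_coeff]
end


section
variable {a x : ℝ} (n : ℕ) (ha : 0 ≤ a) (hx : 0 ≤ x)

lemma onex_pos (hx : 0 ≤ x) : (0:ℝ) < 1 + x := by linarith
lemma u_nonneg (hx : 0 ≤ x) : 0 ≤ x/(1+x) := div_nonneg hx (le_of_lt (onex_pos hx))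
lemma u_lt_one (hx : 0 ≤ x) : x/(1+x) < 1 := by
  rw [div_lt_one (onex_pos hx)]; linarith
lemma one_sub_u (hx : 0 ≤ x) : 1 - x/(1+x) = (1+x)⁻¹ := by
  have h := (onex_pos hx).ne'
  field_simp
  ring

include hx in
lemma Wgb_eq (k : ℕ) : Wgb a n k x =
    Real.exp (-(a*(x/(1+x)))) * (((1+x):ℝ)^n)⁻¹ *
      (Pba k n a / (Nat.factorial k : ℝ) * (x/(1+x)) ^ k) := by
  have h := (onex_pos hx).ne'
  have harg : -(a * x) / (1 + x) = -(a*(x/(1+x))) := by field_simp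
  rw [Wgb, harg, div_pow, pow_add]
  field_simp

include ha hx in
lemma Wgb_hasSum₀ : HasSum (fun k => Wgb a n k x) 1 := by
  have h := (onex_pos hx).ne'
  have H := (hasSum_Pba n ha (u_nonneg hx) (u_lt_one hx)).mul_left
    (Real.exp (-(a*(x/(1+x)))) * (((1+x):ℝ)^n)⁻¹)
  have hE := (Real.exp_pos (a*(x/(1+x)))).ne'
  have hval : Real.exp (-(a*(x/(1+x)))) * (((1+x):ℝ)^n)⁻¹ *
      (((1 - x/(1+x))^n)⁻¹ * Real.exp (a*(x/(1+x)))) = 1 := by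
    rw [one_sub_u hx, inv_pow, inv_inv, Real.exp_neg]
    field_simp
  rw [hval] at H
  exact H.congr_fun fun k => Wgb_eq n hx k

include ha hx in
lemma Wgb_hasSum₁ : HasSum (fun (k : ℕ) => (k:ℝ) * Wgb a n k x)
    ((n:ℝ)*x + a*(x/(1+x))) := by
  have h := (onex_pos hx).ne'
  have H := (hasSum_Pba_id n ha (u_nonneg hx) (u_lt_one hx)).mul_left
    (Real.exp (-(a*(x/(1+x)))) * (((1+x):ℝ)^n)⁻¹)
  have hE := (Real.exp_pos (a*(x/(1+x)))).ne'
  have hval : Real.exp (-(a*(x/(1+x)))) * (((1+x):ℝ)^n)⁻¹ *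
      ((n:ℝ)*(x/(1+x))*((1 - x/(1+x))^(n+1))⁻¹ * Real.exp (a*(x/(1+x)))
        + ((1 - x/(1+x))^n)⁻¹ * (a*(x/(1+x))*Real.exp (a*(x/(1+x)))))
      = (n:ℝ)*x + a*(x/(1+x)) := by
    rw [one_sub_u hx, inv_pow, inv_pow, inv_inv, inv_inv, Real.exp_neg]
    field_simp
    ring
  rw [hval] at H
  exact H.congr_fun fun k => by rw [Wgb_eq n hx k]; ring

include ha hx in
lemma Wgb_hasSum₂' : HasSum (fun (k : ℕ) => (k:ℝ) * ((k:ℝ)-1) * Wgb a n k x)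
    ((n:ℝ)*((n:ℝ)+1)*x^2 + 2*a*(x/(1+x))*(n:ℝ)*x + a^2*(x/(1+x))^2) := by
  have h := (onex_pos hx).ne'
  have H := (hasSum_Pba_id2 n ha (u_nonneg hx) (u_lt_one hx)).mul_left
    (Real.exp (-(a*(x/(1+x)))) * (((1+x):ℝ)^n)⁻¹)
  have hE := (Real.exp_pos (a*(x/(1+x)))).ne'
  have hval : Real.exp (-(a*(x/(1+x)))) * (((1+x):ℝ)^n)⁻¹ *
      ((n:ℝ)*((n:ℝ)+1)*(x/(1+x))^2*((1 - x/(1+x))^(n+2))⁻¹ * Real.exp (a*(x/(1+x)))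
        + 2 * (((n:ℝ)*(x/(1+x))*((1 - x/(1+x))^(n+1))⁻¹) * ((a*(x/(1+x))) * Real.exp (a*(x/(1+x)))))
        + ((1 - x/(1+x))^n)⁻¹ * ((a*(x/(1+x)))^2*Real.exp (a*(x/(1+x)))))
      = (n:ℝ)*((n:ℝ)+1)*x^2 + 2*a*(x/(1+x))*(n:ℝ)*x + a^2*(x/(1+x))^2 := by
    rw [one_sub_u hx, inv_pow, inv_pow, inv_pow, inv_inv, inv_inv, inv_inv, Real.exp_neg]
    field_simp
    ring
  rw [hval] at H
  exact H.congr_fun fun k => by rw [Wgb_eq n hx k]; ring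

include ha hx in
lemma Wgb_hasSum₂ : HasSum (fun (k : ℕ) => (k:ℝ)^2 * Wgb a n k x)
    ((n:ℝ)*((n:ℝ)+1)*x^2 + 2*a*(x/(1+x))*(n:ℝ)*x + a^2*(x/(1+x))^2
      + ((n:ℝ)*x + a*(x/(1+x)))) := by
  refine ((Wgb_hasSum₂' n ha hx).add (Wgb_hasSum₁ n ha hx)).congr_fun fun k => ?_
  ring
end


lemma algA {lo hi t x : ℝ} (h1 : lo ≤ t) (h2 : t ≤ hi) :
    (t-x)^2 ≤ (lo-x)^2 + (hi-x)^2 := by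
  rcases le_total t x with h | h
  · have h3 : (t-x)^2 ≤ (lo-x)^2 := by
      nlinarith [mul_nonneg (sub_nonneg.2 h1) (by linarith : (0:ℝ) ≤ 2*x - t - lo)]
    nlinarith [sq_nonneg (hi-x)]
  · have h3 : (t-x)^2 ≤ (hi-x)^2 := by
      nlinarith [mul_nonneg (sub_nonneg.2 h2) (by linarith : (0:ℝ) ≤ t + hi - 2*x)]
    nlinarith [sq_nonneg (lo-x)]

lemma algE {nR x a u B : ℝ} (hn : 0 ≤ nR) (hx : 0 ≤ x) (hxB : x ≤ B) (ha : 0 ≤ a)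
    (hu : 0 ≤ u) (hu1 : u ≤ 1) :
    2*(nR+1)*x^2 - 4*a*u*x + 2*x*(nR-1) + 2*a^2*u^2 + 4*a*u + 1
      ≤ (2*B^2+2*B+2*a^2+4*a+1)*(nR+1) := by
  have hB : 0 ≤ B := le_trans hx hxB
  have hx2 : x^2 ≤ B^2 := by nlinarith
  nlinarith [mul_nonneg (sub_nonneg.2 hxB) hn, mul_nonneg (mul_nonneg ha hu) hx,
    mul_nonneg (mul_nonneg ha ha) (mul_nonneg hu (sub_nonneg.2 hu1)),
    mul_nonneg ha (sub_nonneg.2 hu1), mul_nonneg hn (sub_nonneg.2 hx2),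
    mul_nonneg (mul_nonneg ha ha) hn, mul_nonneg ha hn, hn]

lemma algT {nR x a u : ℝ} (hn : 0 ≤ nR) (hx : 0 ≤ x) (ha : 0 ≤ a)
    (hu : 0 ≤ u) (hu1 : u ≤ 1) :
    (nR*(nR+1)*x^2 + 2*a*u*nR*x + a^2*u^2 + (nR*x + a*u)) + 2*(nR*x + a*u) + 1
      ≤ (a^2+5*a+5)*(1+x^2)*(nR+1)^2 := by
  have k1 : 2*a*u*nR*x ≤ a*nR*(1+x^2) := by
    nlinarith [mul_nonneg (mul_nonneg ha hn) (sq_nonneg (x-1)),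
      mul_nonneg (mul_nonneg (mul_nonneg ha hn) hx) (sub_nonneg.2 hu1)]
  have k2 : a^2*u^2 ≤ a^2 := by nlinarith [mul_nonneg (mul_nonneg ha ha) (mul_nonneg hu hu), sq_nonneg a, mul_nonneg (mul_nonneg ha ha) (mul_nonneg (sub_nonneg.2 hu1) (by linarith : (0:ℝ) ≤ 1 + u))]
  have k3 : 3*(nR*x) ≤ (3/2)*nR*(1+x^2) := by nlinarith [mul_nonneg hn (sq_nonneg (x-1))]
  have k4 : a*u ≤ a := by nlinarith [mul_nonneg ha (sub_nonneg.2 hu1)]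
  have k5 : nR*(nR+1)*x^2 ≤ 5*x^2*(nR+1)^2 := by nlinarith [mul_nonneg (sq_nonneg x) hn, mul_nonneg (sq_nonneg x) (mul_nonneg hn hn), sq_nonneg x]
  nlinarith [mul_nonneg hn hn, mul_nonneg (mul_nonneg ha ha) (mul_nonneg hn hn),
    mul_nonneg ha (mul_nonneg hn hn), mul_nonneg (sq_nonneg x) (mul_nonneg hn hn),
    mul_nonneg ha hn, mul_nonneg (mul_nonneg ha hn) hn, hn, ha,
    mul_nonneg (sq_nonneg x) hn, sq_nonneg x, mul_nonneg hn (sq_nonneg (x-1)),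
    mul_nonneg (mul_nonneg ha ha) (sq_nonneg x), mul_nonneg ha (sq_nonneg x)]


def T1v (a x : ℝ) (n : ℕ) : ℝ := (n:ℝ)*x + a*(x/(1+x))
def T2v (a x : ℝ) (n : ℕ) : ℝ :=
  (n:ℝ)*((n:ℝ)+1)*x^2 + 2*a*(x/(1+x))*(n:ℝ)*x + a^2*(x/(1+x))^2 + T1v a x n

lemma Wgb_nonneg {a x : ℝ} (ha : 0 ≤ a) (hx : 0 ≤ x) (n k : ℕ) : 0 ≤ Wgb a n k x := by
  have h1 : (0:ℝ) < 1 + x := by linarith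
  apply div_nonneg
  · exact mul_nonneg (mul_nonneg (Real.exp_nonneg _)
      (div_nonneg (Pba_nonneg ha k n) (Nat.cast_nonneg _))) (pow_nonneg hx _)
  · positivity

lemma Wgb_hasSum_poly (n : ℕ) {a x : ℝ} (ha : 0 ≤ a) (hx : 0 ≤ x) (p q r : ℝ) :
    HasSum (fun (k : ℕ) => (p*(k:ℝ)^2 + q*(k:ℝ) + r) * Wgb a n k x)
      (p * T2v a x n + q * T1v a x n + r) := by
  have h2 := (Wgb_hasSum₂ n ha hx).mul_left p
  have h1 := (Wgb_hasSum₁ n ha hx).mul_left q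
  have h0 := (Wgb_hasSum₀ n ha hx).mul_left r
  have H := (h2.add h1).add h0
  rw [mul_one] at H
  unfold T2v T1v
  exact H.congr_fun fun k => by ring

section
variable {a M : ℝ} {f : ℝ → ℝ}

lemma M_nonneg (hgrow : ∀ x : ℝ, 0 ≤ x → |f x| ≤ M * (1 + x ^ 2)) : 0 ≤ M := by
  have h := hgrow 0 le_rfl
  have := abs_nonneg (f 0)
  nlinarith

lemma interval_endpoints (n k : ℕ) :
    (0:ℝ) ≤ (k:ℝ)/((n:ℝ)+1) ∧ (k:ℝ)/((n:ℝ)+1) ≤ ((k:ℝ)+1)/((n:ℝ)+1) ∧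
      ((k:ℝ)+1)/((n:ℝ)+1) - (k:ℝ)/((n:ℝ)+1) = 1/((n:ℝ)+1) := by
  have hN : (0:ℝ) < (n:ℝ)+1 := by positivity
  refine ⟨by positivity, by gcongr <;> linarith, by rw [div_sub_div_same]; ring_nf⟩

lemma f_intervalIntegrable (hcont : ContinuousOn f (Set.Ici 0)) (n k : ℕ) :
    IntervalIntegrable f volume ((k:ℝ)/((n:ℝ)+1)) (((k:ℝ)+1)/((n:ℝ)+1)) := by
  obtain ⟨h0, hle, _⟩ := interval_endpoints n k
  apply ContinuousOn.intervalIntegrable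
  apply hcont.mono
  rw [Set.uIcc_of_le hle]
  intro t ht
  exact le_trans h0 ht.1

lemma Kgb_term_bound (ha : 0 ≤ a)
    (hgrow : ∀ x : ℝ, 0 ≤ x → |f x| ≤ M * (1 + x ^ 2)) (n k : ℕ) {x : ℝ} (hx : 0 ≤ x) :
    ‖Wgb a n k x * ∫ t in ((k:ℝ)/((n:ℝ)+1))..(((k:ℝ)+1)/((n:ℝ)+1)), f t‖
      ≤ Wgb a n k x * (M * (1 + (((k:ℝ)+1)/((n:ℝ)+1))^2) * (1/((n:ℝ)+1))) := by
  obtain ⟨h0, hle, hlen⟩ := interval_endpoints n k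
  have hM := M_nonneg hgrow
  have hW := Wgb_nonneg ha hx n k
  rw [Real.norm_eq_abs, abs_mul, abs_of_nonneg hW]
  apply mul_le_mul_of_nonneg_left _ hW
  have hint : ∀ t ∈ Set.uIoc ((k:ℝ)/((n:ℝ)+1)) (((k:ℝ)+1)/((n:ℝ)+1)),
      ‖f t‖ ≤ M * (1 + (((k:ℝ)+1)/((n:ℝ)+1))^2) := by
    intro t ht
    rw [Set.uIoc_of_le hle] at ht
    have ht0 : 0 ≤ t := le_trans h0 (le_of_lt ht.1)
    have := hgrow t ht0
    have ht2 : t^2 ≤ (((k:ℝ)+1)/((n:ℝ)+1))^2 := pow_le_pow_left₀ ht0 ht.2 2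
    rw [Real.norm_eq_abs]
    nlinarith
  have := intervalIntegral.norm_integral_le_of_norm_le_const hint
  rw [hlen] at this
  calc |∫ t in ((k:ℝ)/((n:ℝ)+1))..(((k:ℝ)+1)/((n:ℝ)+1)), f t|
      ≤ M * (1 + (((k:ℝ)+1)/((n:ℝ)+1))^2) * |1/((n:ℝ)+1)| := this
    _ = M * (1 + (((k:ℝ)+1)/((n:ℝ)+1))^2) * (1/((n:ℝ)+1)) := by
        rw [abs_of_nonneg (by positivity)]

lemma Kgb_summable (ha : 0 ≤ a)
    (hgrow : ∀ x : ℝ, 0 ≤ x → |f x| ≤ M * (1 + x ^ 2)) (n : ℕ) {x : ℝ} (hx : 0 ≤ x) :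
    Summable (fun k : ℕ =>
      Wgb a n k x * ∫ t in ((k:ℝ)/((n:ℝ)+1))..(((k:ℝ)+1)/((n:ℝ)+1)), f t) := by
  have hN : ((n:ℝ)+1) ≠ 0 := by positivity
  have hpoly := (Wgb_hasSum_poly n ha hx (M/((n:ℝ)+1)^3) (2*M/((n:ℝ)+1)^3)
    (M/((n:ℝ)+1) + M/((n:ℝ)+1)^3)).summable
  have hg : Summable (fun k : ℕ =>
      Wgb a n k x * (M * (1 + (((k:ℝ)+1)/((n:ℝ)+1))^2) * (1/((n:ℝ)+1)))) := by
    refine hpoly.congr fun k => ?_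
    field_simp
    ring
  exact Summable.of_norm_bounded hg (fun k => Kgb_term_bound ha hgrow n k hx)

lemma Kgb_abs_le (ha : 0 ≤ a)
    (hgrow : ∀ x : ℝ, 0 ≤ x → |f x| ≤ M * (1 + x ^ 2)) (n : ℕ) {x : ℝ} (hx : 0 ≤ x) :
    |Kgb a n f x| ≤ M * (a^2+5*a+6) * (1+x^2) := by
  have hN : (0:ℝ) < (n:ℝ)+1 := by positivity
  have hM := M_nonneg hgrow
  have hx1 : (0:ℝ) < 1 + x := by linarith
  have hpoly := Wgb_hasSum_poly n ha hx (M/((n:ℝ)+1)^3) (2*M/((n:ℝ)+1)^3)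
    (M/((n:ℝ)+1) + M/((n:ℝ)+1)^3)
  have hb : ∀ k : ℕ,
      ‖Wgb a n k x * ∫ t in ((k:ℝ)/((n:ℝ)+1))..(((k:ℝ)+1)/((n:ℝ)+1)), f t‖
      ≤ (M/((n:ℝ)+1)^3*(k:ℝ)^2 + 2*M/((n:ℝ)+1)^3*(k:ℝ)
          + (M/((n:ℝ)+1) + M/((n:ℝ)+1)^3)) * Wgb a n k x := by
    intro k
    refine le_trans (Kgb_term_bound ha hgrow n k hx) (le_of_eq ?_)
    field_simp
    ring
  have habs := tsum_of_norm_bounded hpoly hb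
  rw [Kgb, abs_mul, abs_of_nonneg (le_of_lt hN)]
  rw [Real.norm_eq_abs] at habs
  have step1 : ((n:ℝ)+1) * |∑' k : ℕ,
      Wgb a n k x * ∫ t in ((k:ℝ)/((n:ℝ)+1))..(((k:ℝ)+1)/((n:ℝ)+1)), f t|
      ≤ ((n:ℝ)+1) * ((M/((n:ℝ)+1)^3) * T2v a x n + (2*M/((n:ℝ)+1)^3) * T1v a x n
          + (M/((n:ℝ)+1) + M/((n:ℝ)+1)^3)) :=
    mul_le_mul_of_nonneg_left habs (le_of_lt hN)
  refine le_trans step1 ?_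
  have heq : ((n:ℝ)+1) * ((M/((n:ℝ)+1)^3) * T2v a x n + (2*M/((n:ℝ)+1)^3) * T1v a x n
      + (M/((n:ℝ)+1) + M/((n:ℝ)+1)^3))
      = M * ((T2v a x n + 2*T1v a x n + 1)/((n:ℝ)+1)^2) + M := by
    simp only [T2v, T1v]
    field_simp
    ring
  rw [heq]
  have hu0 : 0 ≤ x/(1+x) := by positivity
  have hu1 : x/(1+x) ≤ 1 := by rw [div_le_one hx1]; linarith
  have hT := algT (nR := (n:ℝ)) (x := x) (a := a) (u := x/(1+x))
    (Nat.cast_nonneg n) hx ha hu0 hu1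
  have hTv : T2v a x n + 2*T1v a x n + 1 ≤ (a^2+5*a+5)*(1+x^2)*((n:ℝ)+1)^2 := by
    simp only [T2v, T1v]; convert hT using 2 <;> ring
  have hdiv : (T2v a x n + 2*T1v a x n + 1)/((n:ℝ)+1)^2 ≤ (a^2+5*a+5)*(1+x^2) := by
    rw [div_le_iff₀ (by positivity)]
    linarith
  have h5 : (0:ℝ) ≤ a^2+5*a+5 := by nlinarith
  nlinarith [mul_le_mul_of_nonneg_left hdiv hM, mul_nonneg hM (sq_nonneg x)]

lemma scalar1 {N x C ε' kk : ℝ} (hN : N ≠ 0) :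
    (ε'/2 + C*((kk/N - x)^2 + ((kk+1)/N - x)^2)) * (1/N)
      = (2*C/N^3)*kk^2 + (C*(2/N^2 - 4*x/N)*(1/N))*kk
        + (ε'/2 + C*(1/N^2 - 2*x/N + 2*x^2))*(1/N) := by
  field_simp
  ring

lemma scalar2 {nn x a u C ε' : ℝ} (hN : nn+1 ≠ 0) :
    (nn+1) * ((2*C/(nn+1)^3) * (nn*(nn+1)*x^2 + 2*a*u*nn*x + a^2*u^2 + (nn*x + a*u))
      + (C*(2/(nn+1)^2 - 4*x/(nn+1)))*(1/(nn+1)) * (nn*x + a*u)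
      + (ε'/2 + C*(1/(nn+1)^2 - 2*x/(nn+1) + 2*x^2))*(1/(nn+1)))
    = ε'/2 + C * ((2*(nn+1)*x^2 - 4*a*u*x + 2*x*(nn-1) + 2*a^2*u^2 + 4*a*u + 1)/(nn+1)^2) := by
  field_simp
  ring

lemma Kgb_local (ha : 0 ≤ a) (hcont : ContinuousOn f (Set.Ici 0))
    (hgrow : ∀ x : ℝ, 0 ≤ x → |f x| ≤ M * (1 + x ^ 2))
    (n : ℕ) {x B C ε' : ℝ} (hx : 0 ≤ x) (hxB : x ≤ B) (hC : 0 ≤ C) (hε' : 0 ≤ ε')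
    (hpt : ∀ t, 0 ≤ t → |f t - f x| ≤ ε'/2 + C*(t-x)^2) :
    |Kgb a n f x - f x| ≤ ε'/2 + C * ((2*B^2+2*B+2*a^2+4*a+1)/((n:ℝ)+1)) := by
  have hN : (0:ℝ) < (n:ℝ)+1 := by positivity
  have hN' : ((n:ℝ)+1) ≠ 0 := ne_of_gt hN
  have hx1 : (0:ℝ) < 1 + x := by linarith
  set p := 2*C/((n:ℝ)+1)^3 with hp
  set q := (C*(2/((n:ℝ)+1)^2 - 4*x/((n:ℝ)+1)))*(1/((n:ℝ)+1)) with hq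
  set r := (ε'/2 + C*(1/((n:ℝ)+1)^2 - 2*x/((n:ℝ)+1) + 2*x^2))*(1/((n:ℝ)+1)) with hr
  -- decomposition
  have hS1 := Kgb_summable ha hgrow n hx
  have hS0 : Summable (fun k => Wgb a n k x * (f x * (1/((n:ℝ)+1)))) :=
    ((Wgb_hasSum₀ n ha hx).mul_right _).summable
  have hfx : f x = ((n:ℝ)+1) * ∑' k : ℕ, Wgb a n k x * (f x * (1/((n:ℝ)+1))) := by
    rw [tsum_mul_right, (Wgb_hasSum₀ n ha hx).tsum_eq]
    field_simp
  have hdiff : Kgb a n f x - f x = ((n:ℝ)+1) * ∑' k : ℕ,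
      (Wgb a n k x * ∫ t in ((k:ℝ)/((n:ℝ)+1))..(((k:ℝ)+1)/((n:ℝ)+1)), (f t - f x)) := by
    have hsub : (∑' k : ℕ, (Wgb a n k x *
          ∫ t in ((k:ℝ)/((n:ℝ)+1))..(((k:ℝ)+1)/((n:ℝ)+1)), (f t - f x)))
        = (∑' k : ℕ, Wgb a n k x *
            ∫ t in ((k:ℝ)/((n:ℝ)+1))..(((k:ℝ)+1)/((n:ℝ)+1)), f t)
          - ∑' k : ℕ, Wgb a n k x * (f x * (1/((n:ℝ)+1))) := by
      rw [← Summable.tsum_sub hS1 hS0]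
      apply tsum_congr
      intro k
      obtain ⟨h0, hle, hlen⟩ := interval_endpoints n k
      rw [intervalIntegral.integral_sub (f_intervalIntegrable hcont n k)
        intervalIntegrable_const, intervalIntegral.integral_const, hlen, smul_eq_mul]
      ring
    rw [hsub, mul_sub, Kgb, ← hfx]
  -- termwise bound
  have hb : ∀ k : ℕ,
      ‖Wgb a n k x * ∫ t in ((k:ℝ)/((n:ℝ)+1))..(((k:ℝ)+1)/((n:ℝ)+1)), (f t - f x)‖
      ≤ (p*(k:ℝ)^2 + q*(k:ℝ) + r) * Wgb a n k x := by
    intro k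
    obtain ⟨h0, hle, hlen⟩ := interval_endpoints n k
    have hW := Wgb_nonneg ha hx n k
    rw [Real.norm_eq_abs, abs_mul, abs_of_nonneg hW]
    have hDk : ∀ t ∈ Set.uIoc ((k:ℝ)/((n:ℝ)+1)) (((k:ℝ)+1)/((n:ℝ)+1)),
        ‖f t - f x‖ ≤ ε'/2 + C*(((k:ℝ)/((n:ℝ)+1) - x)^2 + ((((k:ℝ)+1)/((n:ℝ)+1)) - x)^2) := by
      intro t ht
      rw [Set.uIoc_of_le hle] at ht
      have ht0 : 0 ≤ t := le_trans h0 (le_of_lt ht.1)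
      have h1 := hpt t ht0
      have h2 : (t-x)^2 ≤ ((k:ℝ)/((n:ℝ)+1) - x)^2 + ((((k:ℝ)+1)/((n:ℝ)+1)) - x)^2 :=
        algA (le_of_lt ht.1) ht.2
      rw [Real.norm_eq_abs]
      nlinarith [mul_le_mul_of_nonneg_left h2 hC]
    have hI := intervalIntegral.norm_integral_le_of_norm_le_const hDk
    rw [hlen, Real.norm_eq_abs, abs_of_nonneg (by positivity : (0:ℝ) ≤ 1/((n:ℝ)+1))] at hI
    calc Wgb a n k x * |∫ t in ((k:ℝ)/((n:ℝ)+1))..(((k:ℝ)+1)/((n:ℝ)+1)), (f t - f x)|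
        ≤ Wgb a n k x * ((ε'/2 + C*(((k:ℝ)/((n:ℝ)+1) - x)^2
            + ((((k:ℝ)+1)/((n:ℝ)+1)) - x)^2)) * (1/((n:ℝ)+1))) :=
          mul_le_mul_of_nonneg_left hI hW
      _ = (p*(k:ℝ)^2 + q*(k:ℝ) + r) * Wgb a n k x := by
          rw [hp, hq, hr, mul_comm]
          congr 1
          exact scalar1 hN'
  have hpoly := Wgb_hasSum_poly n ha hx p q r
  have habs := tsum_of_norm_bounded hpoly hb
  rw [Real.norm_eq_abs] at habs
  have step1 : |Kgb a n f x - f x| ≤ ((n:ℝ)+1) * (p * T2v a x n + q * T1v a x n + r) := by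
    rw [hdiff, abs_mul, abs_of_nonneg (le_of_lt hN)]
    exact mul_le_mul_of_nonneg_left habs (le_of_lt hN)
  refine le_trans step1 ?_
  have heq : ((n:ℝ)+1) * (p * T2v a x n + q * T1v a x n + r)
      = ε'/2 + C * ((2*((n:ℝ)+1)*x^2 - 4*a*(x/(1+x))*x + 2*x*((n:ℝ)-1)
          + 2*a^2*(x/(1+x))^2 + 4*a*(x/(1+x)) + 1)/((n:ℝ)+1)^2) := by
    rw [hp, hq, hr]
    unfold T2v T1v
    exact scalar2 hN'
  rw [heq]
  have hu0 : 0 ≤ x/(1+x) := by positivity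
  have hu1 : x/(1+x) ≤ 1 := by rw [div_le_one hx1]; linarith
  have hE := algE (nR := (n:ℝ)) (x := x) (a := a) (u := x/(1+x)) (B := B)
    (Nat.cast_nonneg n) hx hxB ha hu0 hu1
  have hdiv : (2*((n:ℝ)+1)*x^2 - 4*a*(x/(1+x))*x + 2*x*((n:ℝ)-1)
      + 2*a^2*(x/(1+x))^2 + 4*a*(x/(1+x)) + 1)/((n:ℝ)+1)^2
      ≤ (2*B^2+2*B+2*a^2+4*a+1)/((n:ℝ)+1) := by
    rw [div_le_div_iff₀ (by positivity) hN]
    nlinarith [hE]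
  have := mul_le_mul_of_nonneg_left hdiv hC
  linarith


theorem Kgb_uniform {α : ℝ} (ha : 0 ≤ a) (hα : 0 < α)
    (hcont : ContinuousOn f (Set.Ici 0))
    (hgrow : ∀ x : ℝ, 0 ≤ x → |f x| ≤ M * (1 + x ^ 2)) :
    ∀ ε' > (0:ℝ), ∃ N : ℕ, ∀ n ≥ N, ∀ x : ℝ, 0 ≤ x →
      |Kgb a n f x - f x| / (1 + x ^ ((2:ℝ)+α)) ≤ ε' := by
  intro ε' hε'
  have hM := M_nonneg hgrow
  set Ca := M * (a^2+5*a+6) + M with hCa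
  have hCa0 : 0 ≤ Ca := by rw [hCa]; nlinarith
  clear_value Ca
  -- choose B
  obtain ⟨B₀, hB₀⟩ := (tendsto_rpow_atTop hα).eventually_ge_atTop (2*Ca/ε') |>.exists_forall_of_atTop
  set B := max B₀ 1 with hB
  have hB1 : (1:ℝ) ≤ B := le_max_right _ _
  have hB0 : (0:ℝ) ≤ B := by linarith
  have hB₀B : B₀ ≤ B := le_max_left _ _
  clear_value B
  -- tail estimate
  have htail : ∀ n : ℕ, ∀ x : ℝ, B ≤ x → |Kgb a n f x - f x| / (1 + x ^ ((2:ℝ)+α)) ≤ ε' := by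
    intro n x hBx
    have hx1 : (1:ℝ) ≤ x := le_trans hB1 hBx
    have hx0 : (0:ℝ) ≤ x := by linarith
    have hxpos : (0:ℝ) < x := by linarith
    have hnum : |Kgb a n f x - f x| ≤ Ca * (1+x^2) := by
      have h1 := Kgb_abs_le ha hgrow n hx0
      have h2 := hgrow x hx0
      rw [hCa]
      calc |Kgb a n f x - f x| ≤ |Kgb a n f x| + |f x| := abs_sub _ _
        _ ≤ M * (a^2+5*a+6) * (1+x^2) + M * (1+x^2) := by linarith
        _ = (M * (a^2+5*a+6) + M) * (1+x^2) := by ring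
    have hxa : 2*Ca/ε' ≤ x ^ α := hB₀ x (le_trans hB₀B hBx)
    have hxa' : 2*Ca ≤ ε' * x ^ α := by
      rw [div_le_iff₀ hε'] at hxa
      linarith [hxa]
    have hsplit : x ^ ((2:ℝ)+α) = x^2 * x ^ α := by
      rw [Real.rpow_add hxpos]
      congr 1
      rw [show ((2:ℝ)) = ((2:ℕ):ℝ) by norm_num, Real.rpow_natCast]
    have hden : (0:ℝ) < 1 + x ^ ((2:ℝ)+α) := by
      have := Real.rpow_nonneg hx0 ((2:ℝ)+α)
      linarith
    rw [div_le_iff₀ hden]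
    have hx2 : (1:ℝ) ≤ x^2 := by nlinarith
    have hxa0 : (0:ℝ) ≤ x ^ α := Real.rpow_nonneg hx0 _
    calc |Kgb a n f x - f x| ≤ Ca * (1+x^2) := hnum
      _ ≤ ε' * (1 + x ^ ((2:ℝ)+α)) := by
          rw [hsplit]
          nlinarith [mul_le_mul_of_nonneg_right hxa' (le_of_lt (lt_of_lt_of_le one_pos hx2)),
            mul_nonneg (le_of_lt hε') hxa0]
  -- local modulus data
  have hucont : UniformContinuousOn f (Set.Icc 0 (B+1)) :=
    isCompact_Icc.uniformContinuousOn_of_continuous (hcont.mono (fun t ht => ht.1))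
  rw [Metric.uniformContinuousOn_iff] at hucont
  obtain ⟨δ, hδ0, hδ⟩ := hucont (ε'/2) (by linarith)
  set δ' := min δ 1 with hδ'
  have hδ'0 : 0 < δ' := lt_min hδ0 one_pos
  have hδ'1 : δ' ≤ 1 := min_le_right _ _
  have hδ'δ : δ' ≤ δ := min_le_left _ _
  clear_value δ'
  set C := M*(2+3*B^2)/δ'^2 + 2*M with hC
  have hC0 : 0 ≤ C := by
    rw [hC]
    have : 0 ≤ M*(2+3*B^2) := by nlinarith
    positivity
  clear_value C
  have hpt : ∀ x : ℝ, 0 ≤ x → x ≤ B → ∀ t : ℝ, 0 ≤ t →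
      |f t - f x| ≤ ε'/2 + C*(t-x)^2 := by
    intro x hx0 hxB t ht0
    rcases lt_or_ge (|t - x|) δ' with hcase | hcase
    · have htB : t ≤ B + 1 := by
        have := abs_lt.mp hcase
        linarith [this.2, hδ'1]
      have hxmem : x ∈ Set.Icc (0:ℝ) (B+1) := ⟨hx0, by linarith⟩
      have htmem : t ∈ Set.Icc (0:ℝ) (B+1) := ⟨ht0, htB⟩
      have := hδ t htmem x hxmem (by rw [Real.dist_eq]; exact lt_of_lt_of_le hcase hδ'δ)
      rw [Real.dist_eq] at this
      have hnn : 0 ≤ C*(t-x)^2 := mul_nonneg hC0 (sq_nonneg (t-x))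
      linarith
    · have hsq : δ'^2 ≤ (t-x)^2 := by
        have := abs_nonneg (t-x)
        calc δ'^2 ≤ |t-x|^2 := by nlinarith
          _ = (t-x)^2 := sq_abs _
      have h1 := hgrow t ht0
      have h2 := hgrow x hx0
      have habs : |f t - f x| ≤ M*(2 + x^2 + t^2) := by
        calc |f t - f x| ≤ |f t| + |f x| := abs_sub _ _
          _ ≤ M*(2 + x^2 + t^2) := by nlinarith
      have ht2 : t^2 ≤ 2*(t-x)^2 + 2*x^2 := by nlinarith [sq_nonneg (t - 2*x), sq_nonneg (t-x)]
      have hkey : M*(2+3*x^2) ≤ (M*(2+3*B^2)/δ'^2) * (t-x)^2 := by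
        have hx2B : x^2 ≤ B^2 := by nlinarith
        have step1 : M*(2+3*x^2) ≤ M*(2+3*B^2) := by nlinarith [mul_le_mul_of_nonneg_left hx2B hM]
        have step2 : M*(2+3*B^2) = (M*(2+3*B^2)/δ'^2) * δ'^2 := by
          field_simp
        have step3 : (M*(2+3*B^2)/δ'^2) * δ'^2 ≤ (M*(2+3*B^2)/δ'^2) * (t-x)^2 := by
          apply mul_le_mul_of_nonneg_left hsq
          positivity
        linarith
      rw [hC]
      nlinarith [hkey, ht2]
  -- choose N
  set CQ := 2*B^2+2*B+2*a^2+4*a+1 with hCQ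
  have hCQ0 : 0 ≤ CQ := by rw [hCQ]; nlinarith
  clear_value CQ
  obtain ⟨N, hN⟩ := exists_nat_gt (2*C*CQ/ε')
  refine ⟨N, fun n hn x hx0 => ?_⟩
  rcases le_or_gt x B with hxB | hxB
  · -- local case
    have hloc := Kgb_local ha hcont hgrow n hx0 hxB hC0 (by linarith) (hpt x hx0 hxB)
    have hnN : (2*C*CQ/ε') ≤ (n:ℝ) + 1 := by
      have : (N:ℝ) ≤ (n:ℝ) := Nat.cast_le.mpr hn
      linarith
    have hterm : C * (CQ/((n:ℝ)+1)) ≤ ε'/2 := by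
      have hNpos : (0:ℝ) < (n:ℝ)+1 := by positivity
      have h2 : 2*C*CQ ≤ ((n:ℝ)+1) * ε' := by
        rw [div_le_iff₀ hε'] at hnN
        linarith
      rw [← mul_div_assoc, div_le_iff₀ hNpos]
      linarith
    have hden : (1:ℝ) ≤ 1 + x ^ ((2:ℝ)+α) := by
      have := Real.rpow_nonneg hx0 ((2:ℝ)+α)
      linarith
    calc |Kgb a n f x - f x| / (1 + x ^ ((2:ℝ)+α)) ≤ |Kgb a n f x - f x| :=
          div_le_self (abs_nonneg _) hden
      _ ≤ ε'/2 + C * (CQ/((n:ℝ)+1)) := by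
          rw [hCQ] at hterm ⊢
          calc |Kgb a n f x - f x|
              ≤ ε'/2 + C * ((2*B^2+2*B+2*a^2+4*a+1)/((n:ℝ)+1)) := hloc
            _ = ε'/2 + C * ((2*B^2+2*B+2*a^2+4*a+1)/((n:ℝ)+1)) := rfl
      _ ≤ ε' := by linarith
  · exact htail n x (le_of_lt hxB)

end

end SeriesAux

/-- A-statistical convergence in the weighted norm. -/
theorem statement10 (a α M : ℝ) (ha : 0 ≤ a) (hα : 0 < α) (A : ℕ → ℕ → ℝ)
    (hApos : ∀ n k : ℕ, 0 ≤ A n k)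
    (hAreg : ∀ (x : ℕ → ℝ) (L : ℝ), Tendsto x atTop (nhds L) →
      Tendsto (fun n : ℕ => ∑' k : ℕ, A n k * x k) atTop (nhds L))
    (f : ℝ → ℝ) (hcont : ContinuousOn f (Set.Ici 0))
    (hgrow : ∀ x : ℝ, 0 ≤ x → |f x| ≤ M * (1 + x ^ 2))
    (hlim : ∃ L : ℝ, Tendsto (fun x : ℝ => f x / (1 + x ^ 2)) atTop (nhds L)) :
    ∀ ε > (0 : ℝ),
      Tendsto (fun n : ℕ =>
          ∑' k : {k : ℕ // ε ≤ |rhoAlphaNorm α (fun x => Kgb a k f x - f x) - 0|},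
            A n (k : ℕ)) atTop (nhds 0) := by
  intro ε hε
  -- each column of A tends to 0
  have hAj : ∀ j : ℕ, Tendsto (fun n => A n j) atTop (nhds 0) := by
    intro j
    have hx : Tendsto (fun k : ℕ => if k = j then (1:ℝ) else 0) atTop (nhds 0) := by
      apply Tendsto.congr' _ tendsto_const_nhds
      filter_upwards [eventually_gt_atTop j] with k hk
      exact (if_neg (Nat.ne_of_gt hk)).symm
    have h := hAreg _ 0 hx
    refine h.congr fun n => ?_
    rw [tsum_eq_single j]
    · simp
    · intro b hb
      simp [hb]
  -- the exceptional set is finite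
  obtain ⟨N, hN⟩ := Kgb_uniform (M := M) ha hα hcont hgrow (ε/2) (by linarith)
  have hbound : ∀ k ≥ N, |rhoAlphaNorm α (fun x => Kgb a k f x - f x) - 0| ≤ ε/2 := by
    intro k hk
    have hval : ∀ y : Set.Ici (0:ℝ),
        |Kgb a k f y - f y| / (1 + (y:ℝ) ^ ((2:ℝ)+α)) ≤ ε/2 := fun y =>
      hN k hk y y.2
    haveI : Nonempty (Set.Ici (0:ℝ)) := ⟨⟨0, Set.self_mem_Ici⟩⟩
    have hub : rhoAlphaNorm α (fun x => Kgb a k f x - f x) ≤ ε/2 := ciSup_le hval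
    have hlb : 0 ≤ rhoAlphaNorm α (fun x => Kgb a k f x - f x) := by
      have hbdd : BddAbove (Set.range (fun y : Set.Ici (0:ℝ) =>
          |Kgb a k f y - f y| / (1 + (y:ℝ) ^ ((2:ℝ)+α)))) := by
        refine ⟨ε/2, ?_⟩
        rintro _ ⟨y, rfl⟩
        exact hval y
      refine le_trans ?_ (le_ciSup hbdd ⟨0, Set.self_mem_Ici⟩)
      have h0 : (0:ℝ) ≤ ((⟨0, Set.self_mem_Ici⟩ : Set.Ici (0:ℝ)) : ℝ) ^ ((2:ℝ)+α) :=
        Real.rpow_nonneg (le_refl 0) _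
      positivity
    rw [sub_zero, abs_of_nonneg hlb]
    exact hub
  have hfin : {k : ℕ | ε ≤ |rhoAlphaNorm α (fun x => Kgb a k f x - f x) - 0|}.Finite := by
    apply Set.Finite.subset (Set.finite_Iio N)
    intro k hk
    by_contra hcon
    have hkN : N ≤ k := not_lt.mp hcon
    have := hbound k hkN
    have hmem : ε ≤ |rhoAlphaNorm α (fun x => Kgb a k f x - f x) - 0| := hk
    linarith
  have heq : (fun n : ℕ =>
      ∑' k : {k : ℕ // ε ≤ |rhoAlphaNorm α (fun x => Kgb a k f x - f x) - 0|},
        A n (k : ℕ)) = fun n : ℕ => ∑ k ∈ hfin.toFinset, A n k := by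
    funext n
    have h1 : (∑' k : {k : ℕ // ε ≤ |rhoAlphaNorm α (fun x => Kgb a k f x - f x) - 0|},
        A n (k : ℕ)) = ∑' k : ℕ,
          Set.indicator {k : ℕ | ε ≤ |rhoAlphaNorm α (fun x => Kgb a k f x - f x) - 0|}
            (A n) k :=
      tsum_subtype _ _
    rw [h1, tsum_eq_sum (s := hfin.toFinset)
      (fun b hb => Set.indicator_of_notMem (fun h => hb (hfin.mem_toFinset.2 h)) _)]
    exact Finset.sum_congr rfl fun b hb =>
      Set.indicator_of_mem (hfin.mem_toFinset.mp hb) _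
  rw [heq]
  have := tendsto_finset_sum hfin.toFinset (fun j _ => hAj j)
  simpa using this
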